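/- Let f : ℝⁿ → ℝ be a multivariate quartic polynomial. Then for every x ∈ ℝⁿ and t > 0, the gradient of the Steklov function with respect to x satisfies ∇_x μ_f(x,t) = ∇f(x) + (t²/6)·Σ_{i=1}^n ∇f_{ii}(x), where f_{ii} := ∂²f/∂x_i². -/

import Mathlib

open MeasureTheory Matrix Filter

/-- Partial derivative of `f` in the `i`-th coordinate direction. -/
noncomputable def pd {n : ℕ} (i : Fin n) (f : (Fin n → ℝ) → ℝ) : (Fin n → ℝ) → ℝ :=
  fun x => fderiv ℝ f x (Pi.single i 1)

/-- The gradient of `f` at `x`, as a vector of first partial derivatives. -/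
noncomputable def grad {n : ℕ} (f : (Fin n → ℝ) → ℝ) (x : Fin n → ℝ) : Fin n → ℝ :=
  fun i => pd i f x

/-- The Hessian matrix of `f` at `x`, of second partial derivatives. -/
noncomputable def hess {n : ℕ} (f : (Fin n → ℝ) → ℝ) (x : Fin n → ℝ) :
    Matrix (Fin n) (Fin n) ℝ :=
  Matrix.of fun i j => pd i (pd j f) x

/-- The Steklov function `μ_f(x,t) = (1/(2t)^n) ∫_{x-t}^{x+t} ⋯ ∫ f`. -/
noncomputable def steklov {n : ℕ} (f : (Fin n → ℝ) → ℝ) (x : Fin n → ℝ) (t : ℝ) : ℝ :=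
  (1 / (2 * t) ^ n) * ∫ τ in Set.univ.pi (fun i => Set.Icc (x i - t) (x i + t)), f τ

/-- `f` is a multivariate quartic polynomial: a polynomial of total degree at most 4. -/
def IsMQP {n : ℕ} (f : (Fin n → ℝ) → ℝ) : Prop :=
  ∃ P : MvPolynomial (Fin n) ℝ, P.totalDegree ≤ 4 ∧ ∀ x, f x = MvPolynomial.eval x P

/-- The closed Euclidean (ℓ₂) ball of radius `L` centered at `0` in `ℝⁿ`. -/
def ball2 {n : ℕ} (L : ℝ) : Set (Fin n → ℝ) := {y | ∑ i, (y i) ^ 2 ≤ L ^ 2}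

/-- The Euclidean (ℓ₂) norm of a vector. -/
noncomputable def l2norm {m : ℕ} (v : Fin m → ℝ) : ℝ := Real.sqrt (∑ i, (v i) ^ 2)

namespace SGaux

variable {n : ℕ}

/-- monomial with exponent vector `e` -/
noncomputable def N (e : Fin n → ℕ) : (Fin n → ℝ) → ℝ := fun x => ∏ i, x i ^ e i

/-- 1-D Steklov average of `s ^ a`, valid for `a ≤ 4`. -/
noncomputable def Sk (a : ℕ) (t : ℝ) (s : ℝ) : ℝ :=
  s ^ a + t ^ 2 / 6 * ((a : ℝ) * ((a : ℝ) - 1)) * s ^ (a - 2)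
    + (if a = 4 then t ^ 4 / 5 else 0)

lemma hasFDerivAt_prod (g : Fin n → ℝ → ℝ) (g' : Fin n → ℝ) (x : Fin n → ℝ)
    (hg : ∀ i, HasDerivAt (g i) (g' i) (x i)) :
    HasFDerivAt (fun y => ∏ i, g i (y i))
      (∑ i, (∏ j ∈ Finset.univ.erase i, g j (x j)) •
        ((g' i) • (ContinuousLinearMap.proj i : (Fin n → ℝ) →L[ℝ] ℝ))) x := by
  have h : ∀ i ∈ Finset.univ, HasFDerivAt (fun y : Fin n → ℝ => g i (y i))
      ((g' i) • (ContinuousLinearMap.proj i : (Fin n → ℝ) →L[ℝ] ℝ)) x := by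
    intro i _
    have h1 : HasFDerivAt (fun y : Fin n → ℝ => y i)
        (ContinuousLinearMap.proj i : (Fin n → ℝ) →L[ℝ] ℝ) x :=
      (ContinuousLinearMap.proj i : (Fin n → ℝ) →L[ℝ] ℝ).hasFDerivAt
    exact (hg i).comp_hasFDerivAt x h1
  exact HasFDerivAt.finset_prod h

lemma pd_prod (g : Fin n → ℝ → ℝ) (g' : Fin n → ℝ) (x : Fin n → ℝ)
    (hg : ∀ i, HasDerivAt (g i) (g' i) (x i)) (j : Fin n) :
    pd j (fun y => ∏ i, g i (y i)) x
      = g' j * ∏ i ∈ Finset.univ.erase j, g i (x i) := by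
  rw [pd, (hasFDerivAt_prod g g' x hg).fderiv]
  simp only [ContinuousLinearMap.sum_apply, ContinuousLinearMap.smul_apply,
    ContinuousLinearMap.proj_apply, smul_eq_mul]
  rw [Finset.sum_eq_single j]
  · simp [mul_comm]
  · intro i _ hij
    rw [Pi.single_eq_of_ne hij]; ring
  · simp


lemma differentiable_prod (g : Fin n → ℝ → ℝ) (hg : ∀ i, Differentiable ℝ (g i)) :
    Differentiable ℝ (fun y : Fin n → ℝ => ∏ i, g i (y i)) := by
  intro x
  exact (hasFDerivAt_prod g (fun i => deriv (g i) (x i)) x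
    (fun i => (hg i (x i)).hasDerivAt)).differentiableAt

lemma N_update (e : Fin n → ℕ) (j : Fin n) (m : ℕ) (x : Fin n → ℝ) :
    N (Function.update e j m) x = x j ^ m * ∏ i ∈ Finset.univ.erase j, x i ^ e i := by
  rw [N, ← Finset.mul_prod_erase _ _ (Finset.mem_univ j), Function.update_self]
  congr 1
  exact Finset.prod_congr rfl fun i hi => by
    rw [Function.update_of_ne (Finset.ne_of_mem_erase hi)]

lemma N_update2 (e : Fin n → ℕ) (i j : Fin n) (hij : i ≠ j) (a b : ℕ) (x : Fin n → ℝ) :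
    N (Function.update (Function.update e i a) j b) x
      = x j ^ b * (x i ^ a * ∏ k ∈ (Finset.univ.erase j).erase i, x k ^ e k) := by
  rw [N_update]
  congr 1
  have hi : i ∈ Finset.univ.erase j := Finset.mem_erase.2 ⟨hij, Finset.mem_univ i⟩
  rw [← Finset.mul_prod_erase _ _ hi, Function.update_self]
  congr 1
  exact Finset.prod_congr rfl fun k hk => by
    rw [Function.update_of_ne (Finset.ne_of_mem_erase hk)]

lemma pd_N (e : Fin n → ℕ) (j : Fin n) (x : Fin n → ℝ) :
    pd j (N e) x = (e j : ℝ) * N (Function.update e j (e j - 1)) x := by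
  have h := pd_prod (fun i s => s ^ e i) (fun i => (e i : ℝ) * (x i) ^ (e i - 1)) x
    (fun i => hasDerivAt_pow (e i) (x i)) j
  rw [show N e = (fun y => ∏ i, y i ^ e i) from rfl, h, N_update]
  ring

lemma differentiable_N (e : Fin n → ℕ) : Differentiable ℝ (N e) :=
  differentiable_prod (fun i s => s ^ e i) (fun i => differentiable_pow (e i))

lemma pd_sum {ι : Type*} (s : Finset ι) (h : ι → (Fin n → ℝ) → ℝ)
    (hd : ∀ d ∈ s, Differentiable ℝ (h d)) (j : Fin n) :
    pd j (fun y => ∑ d ∈ s, h d y) = fun z => ∑ d ∈ s, pd j (h d) z := by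
  funext z
  rw [pd, fderiv_fun_sum (fun d hds => (hd d hds).differentiableAt)]
  simp [pd]

lemma pd_const_mul (c : ℝ) (h : (Fin n → ℝ) → ℝ) (hd : Differentiable ℝ h) (j : Fin n) :
    pd j (fun y => c * h y) = fun z => c * pd j h z := by
  funext z
  rw [pd, fderiv_const_mul hd.differentiableAt]
  simp [pd]

lemma pd_sum_mul {ι : Type*} (s : Finset ι) (c : ι → ℝ) (h : ι → (Fin n → ℝ) → ℝ)
    (hd : ∀ d ∈ s, Differentiable ℝ (h d)) (j : Fin n) :
    pd j (fun y => ∑ d ∈ s, c d * h d y) = fun z => ∑ d ∈ s, c d * pd j (h d) z := by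
  rw [pd_sum s (fun d y => c d * h d y) (fun d hds => (hd d hds).const_mul _) j]
  funext z
  exact Finset.sum_congr rfl fun d hds => by
    rw [pd_const_mul (c d) (h d) (hd d hds) j]

lemma pd_pd_N (e : Fin n → ℕ) (i : Fin n) :
    pd i (pd i (N e))
      = fun z => (e i : ℝ) * ((e i - 1 : ℕ) : ℝ) * N (Function.update e i (e i - 2)) z := by
  have h1 : pd i (N e) = fun z => (e i : ℝ) * N (Function.update e i (e i - 1)) z :=
    funext fun z => pd_N e i z
  rw [h1, pd_const_mul _ _ (differentiable_N _) i]
  funext z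
  rw [pd_N]
  simp only [Function.update_self, Function.update_idem, Nat.sub_sub]
  ring

lemma pd_pd_pd_N (e : Fin n → ℕ) (i j : Fin n) :
    pd j (pd i (pd i (N e)))
      = fun z => (e i : ℝ) * ((e i - 1 : ℕ) : ℝ)
          * ((Function.update e i (e i - 2) j : ℕ) : ℝ)
          * N (Function.update (Function.update e i (e i - 2)) j
              (Function.update e i (e i - 2) j - 1)) z := by
  rw [pd_pd_N, pd_const_mul _ _ (differentiable_N _) j]
  funext z
  rw [pd_N]
  ring

lemma hasDerivAt_Sk (a : ℕ) (t s : ℝ) :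
    HasDerivAt (Sk a t)
      ((a : ℝ) * s ^ (a - 1)
        + t ^ 2 / 6 * ((a : ℝ) * ((a : ℝ) - 1)) * (((a - 2 : ℕ) : ℝ) * s ^ (a - 2 - 1))) s := by
  have h1 : HasDerivAt (fun s : ℝ => s ^ a) ((a : ℝ) * s ^ (a - 1)) s := hasDerivAt_pow a s
  have h2 : HasDerivAt (fun s : ℝ => t ^ 2 / 6 * ((a : ℝ) * ((a : ℝ) - 1)) * s ^ (a - 2))
      (t ^ 2 / 6 * ((a : ℝ) * ((a : ℝ) - 1)) * (((a - 2 : ℕ) : ℝ) * s ^ (a - 2 - 1))) s := by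
    simpa using (hasDerivAt_pow (a - 2) s).const_mul (t ^ 2 / 6 * ((a : ℝ) * ((a : ℝ) - 1)))
  exact ((h1.add h2).add_const _)

lemma differentiable_Sk_prod (e : Fin n → ℕ) (t : ℝ) :
    Differentiable ℝ (fun y : Fin n → ℝ => ∏ i, Sk (e i) t (y i)) :=
  differentiable_prod _ fun i => fun s => (hasDerivAt_Sk (e i) t s).differentiableAt


lemma integral_pow_Icc (a : ℕ) (ha : a ≤ 4) (t x : ℝ) (ht : 0 < t) :
    (∫ s in Set.Icc (x - t) (x + t), s ^ a) = 2 * t * Sk a t x := by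
  rw [MeasureTheory.integral_Icc_eq_integral_Ioc,
    ← intervalIntegral.integral_of_le (by linarith : x - t ≤ x + t),
    integral_pow]
  interval_cases a <;> · simp only [Sk]; norm_num; ring

lemma integral_box (e : Fin n → ℕ) (x : Fin n → ℝ) (t : ℝ) :
    (∫ τ in Set.univ.pi (fun i => Set.Icc (x i - t) (x i + t)), N e τ)
      = ∏ i, ∫ s in Set.Icc (x i - t) (x i + t), s ^ e i := by
  rw [← MeasureTheory.integral_indicator
    (MeasurableSet.univ_pi fun i => measurableSet_Icc)]
  have hind : (Set.univ.pi fun i => Set.Icc (x i - t) (x i + t)).indicator (N e)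
      = fun τ => ∏ i, (Set.Icc (x i - t) (x i + t)).indicator (fun s => s ^ e i) (τ i) := by
    funext τ
    by_cases hτ : τ ∈ Set.univ.pi fun i => Set.Icc (x i - t) (x i + t)
    · rw [Set.indicator_of_mem hτ, N]
      exact Finset.prod_congr rfl fun i _ => by
        rw [Set.indicator_of_mem (hτ i (Set.mem_univ i))]
    · rw [Set.indicator_of_notMem hτ]
      rw [Set.mem_univ_pi] at hτ
      push_neg at hτ
      obtain ⟨i, hi⟩ := hτ
      exact (Finset.prod_eq_zero (Finset.mem_univ i)
        (Set.indicator_of_notMem hi _)).symm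
  rw [hind, MeasureTheory.integral_fintype_prod_volume_eq_prod]
  exact Finset.prod_congr rfl fun i _ => by
    rw [MeasureTheory.integral_indicator measurableSet_Icc]


lemma steklov_N (e : Fin n → ℕ) (he : ∀ i, e i ≤ 4) (x : Fin n → ℝ) {t : ℝ} (ht : 0 < t) :
    steklov (N e) x t = ∏ i, Sk (e i) t (x i) := by
  rw [steklov, integral_box]
  have h : ∀ i ∈ Finset.univ, (∫ s in Set.Icc (x i - t) (x i + t), s ^ e i)
      = 2 * t * Sk (e i) t (x i) := fun i _ => integral_pow_Icc (e i) (he i) t (x i) ht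
  rw [Finset.prod_congr rfl h, Finset.prod_mul_distrib, Finset.prod_const,
    Finset.card_univ, Fintype.card_fin]
  have h2t : (2 * t) ^ n ≠ 0 := pow_ne_zero n (by positivity)
  field_simp

lemma steklov_sum {ι : Type*} (s : Finset ι) (c : ι → ℝ) (h : ι → (Fin n → ℝ) → ℝ)
    (hc : ∀ d ∈ s, Continuous (h d)) (x : Fin n → ℝ) (t : ℝ) :
    steklov (fun y => ∑ d ∈ s, c d * h d y) x t
      = ∑ d ∈ s, c d * steklov (h d) x t := by
  have hcompact : IsCompact (Set.univ.pi fun i => Set.Icc (x i - t) (x i + t)) :=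
    isCompact_univ_pi fun i => isCompact_Icc
  have hint : ∀ d ∈ s, MeasureTheory.IntegrableOn (fun y => c d * h d y)
      (Set.univ.pi fun i => Set.Icc (x i - t) (x i + t)) := fun d hds =>
    ((continuous_const.mul (hc d hds)).continuousOn).integrableOn_compact hcompact
  rw [steklov, MeasureTheory.integral_finset_sum _ hint, Finset.mul_sum]
  exact Finset.sum_congr rfl fun d hds => by
    rw [MeasureTheory.integral_const_mul, steklov]; ring


lemma prod_add_of_pairwise {ι : Type*} [DecidableEq ι] (s : Finset ι) (A C : ι → ℝ)
    (h : ∀ i ∈ s, ∀ k ∈ s, i ≠ k → C i = 0 ∨ C k = 0) :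
    ∏ i ∈ s, (A i + C i) = ∏ i ∈ s, A i + ∑ i ∈ s, C i * ∏ k ∈ s.erase i, A k := by
  induction s using Finset.induction_on with
  | empty => simp
  | @insert a s ha ih =>
    rw [Finset.prod_insert ha, Finset.prod_insert ha, Finset.sum_insert ha,
      ih (fun i hi k hk hik =>
        h i (Finset.mem_insert_of_mem hi) k (Finset.mem_insert_of_mem hk) hik),
      Finset.erase_insert ha]
    have e2 : ∀ i ∈ s, ∏ k ∈ (insert a s).erase i, A k = A a * ∏ k ∈ s.erase i, A k := by
      intro i hi
      have hia : i ≠ a := fun h' => ha (h' ▸ hi)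
      rw [Finset.erase_insert_of_ne (Ne.symm hia),
        Finset.prod_insert (fun hmem => ha (Finset.mem_of_mem_erase hmem))]
    have e2' : ∑ i ∈ s, C i * ∏ k ∈ (insert a s).erase i, A k
        = ∑ i ∈ s, C i * (A a * ∏ k ∈ s.erase i, A k) :=
      Finset.sum_congr rfl fun i hi => by rw [e2 i hi]
    rw [e2']
    have hzero : C a * ∑ i ∈ s, C i * ∏ k ∈ s.erase i, A k = 0 := by
      rw [Finset.mul_sum]
      refine Finset.sum_eq_zero fun i hi => ?_
      rcases h a (Finset.mem_insert_self a s) i (Finset.mem_insert_of_mem hi)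
        (by rintro rfl; exact ha hi) with h0 | h0
      · simp [h0]
      · simp [h0]
    have e3 : ∑ i ∈ s, C i * (A a * ∏ k ∈ s.erase i, A k)
        = A a * ∑ i ∈ s, C i * ∏ k ∈ s.erase i, A k := by
      rw [Finset.mul_sum]
      exact Finset.sum_congr rfl fun i _ => by ring
    rw [e3]
    linear_combination hzero

lemma Sk_eq_of_le_three {a : ℕ} (ha : a ≤ 3) (t s : ℝ) :
    Sk a t s = s ^ a + t ^ 2 / 6 * ((a : ℝ) * ((a : ℝ) - 1)) * s ^ (a - 2) := by
  rw [Sk, if_neg (by omega), add_zero]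

lemma C_eq_zero_of_le_one {a : ℕ} (ha : a ≤ 1) (t s : ℝ) :
    t ^ 2 / 6 * ((a : ℝ) * ((a : ℝ) - 1)) * s ^ (a - 2) = 0 := by
  interval_cases a <;> norm_num

lemma differentiable_pd_N (e : Fin n → ℕ) (i : Fin n) :
    Differentiable ℝ (pd i (N e)) := by
  have h : pd i (N e) = fun z => (e i : ℝ) * N (Function.update e i (e i - 1)) z :=
    funext (pd_N e i)
  rw [h]
  exact (differentiable_N _).const_mul _

lemma differentiable_pd_pd_N (e : Fin n → ℕ) (i : Fin n) :
    Differentiable ℝ (pd i (pd i (N e))) := by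
  rw [pd_pd_N]
  exact (differentiable_N _).const_mul _

lemma key (e : Fin n → ℕ) (he : ∑ i, e i ≤ 4) (t : ℝ) (x : Fin n → ℝ) (j : Fin n) :
    pd j (fun y => ∏ i, Sk (e i) t (y i)) x
      = pd j (N e) x + t ^ 2 / 6 * ∑ i, pd j (pd i (pd i (N e))) x := by
  have hLHS := pd_prod (fun i => Sk (e i) t)
      (fun i => (e i : ℝ) * x i ^ (e i - 1)
        + t ^ 2 / 6 * ((e i : ℝ) * ((e i : ℝ) - 1)) * (((e i - 2 : ℕ) : ℝ) * x i ^ (e i - 2 - 1)))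
      x (fun i => hasDerivAt_Sk (e i) t (x i)) j
  rw [hLHS, pd_N]
  simp only [pd_pd_pd_N]
  rcases Nat.eq_zero_or_pos (e j) with hej | hej
  · have hd : ((e j : ℝ) * x j ^ (e j - 1)
        + t ^ 2 / 6 * ((e j : ℝ) * ((e j : ℝ) - 1)) * (((e j - 2 : ℕ) : ℝ) * x j ^ (e j - 2 - 1)))
        = 0 := by
      rw [hej]; norm_num
    have hsum : ∀ i ∈ (Finset.univ : Finset (Fin n)),
        ((e i : ℝ) * ((e i - 1 : ℕ) : ℝ) * ((Function.update e i (e i - 2) j : ℕ) : ℝ)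
          * N (Function.update (Function.update e i (e i - 2)) j
              (Function.update e i (e i - 2) j - 1)) x) = 0 := by
      intro i _
      rcases eq_or_ne i j with rfl | hij
      · simp [Function.update_self, hej]
      · rw [Function.update_of_ne (Ne.symm hij)]
        simp [hej]
    rw [hd, zero_mul, Finset.sum_eq_zero hsum, hej]
    norm_num
  · have h1j : 1 ≤ e j := hej
    set s : Finset (Fin n) := Finset.univ.erase j with hs
    have hsum_add : (∑ i ∈ s, e i) + e j = ∑ i, e i := Finset.sum_erase_add _ _ (Finset.mem_univ j)
    have hs3 : ∑ i ∈ s, e i ≤ 3 := by omega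
    have hes : ∀ i ∈ s, e i ≤ 3 := fun i hi =>
      le_trans (Finset.single_le_sum (fun k _ => Nat.zero_le _) hi) hs3
    have hprodSk : ∏ i ∈ s, Sk (e i) t (x i)
        = ∏ i ∈ s, (x i ^ e i + t ^ 2 / 6 * ((e i : ℝ) * ((e i : ℝ) - 1)) * x i ^ (e i - 2)) :=
      Finset.prod_congr rfl fun i hi => Sk_eq_of_le_three (hes i hi) t (x i)
    have hpair : ∀ i ∈ s, ∀ k ∈ s, i ≠ k →
        (t ^ 2 / 6 * ((e i : ℝ) * ((e i : ℝ) - 1)) * x i ^ (e i - 2) = 0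
          ∨ t ^ 2 / 6 * ((e k : ℝ) * ((e k : ℝ) - 1)) * x k ^ (e k - 2) = 0) := by
      intro i hi k hk hik
      by_cases h1 : e i ≤ 1
      · exact Or.inl (C_eq_zero_of_le_one h1 t (x i))
      · refine Or.inr (C_eq_zero_of_le_one ?_ t (x k))
        by_contra h2
        push_neg at h1 h2
        have hsub : ({i, k} : Finset (Fin n)) ⊆ s := by
          rw [Finset.insert_subset_iff, Finset.singleton_subset_iff]
          exact ⟨hi, hk⟩
        have hle := Finset.sum_le_sum_of_subset (f := e) hsub
        rw [Finset.sum_pair hik] at hle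
        omega
    have hexp := prod_add_of_pairwise s (fun i => x i ^ e i)
        (fun i => t ^ 2 / 6 * ((e i : ℝ) * ((e i : ℝ) - 1)) * x i ^ (e i - 2)) hpair
    rw [hprodSk, hexp, ← Finset.sum_erase_add _ _ (Finset.mem_univ j), ← hs]
    have htermj : ((e j : ℝ) * ((e j - 1 : ℕ) : ℝ) * ((Function.update e j (e j - 2) j : ℕ) : ℝ)
        * N (Function.update (Function.update e j (e j - 2)) j
            (Function.update e j (e j - 2) j - 1)) x)
        = (e j : ℝ) * ((e j - 1 : ℕ) : ℝ) * ((e j - 2 : ℕ) : ℝ)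
          * (x j ^ (e j - 2 - 1) * ∏ i ∈ s, x i ^ e i) := by
      rw [Function.update_self, Function.update_idem, N_update, hs]
    have hterms : ∑ i ∈ s, ((e i : ℝ) * ((e i - 1 : ℕ) : ℝ)
          * ((Function.update e i (e i - 2) j : ℕ) : ℝ)
          * N (Function.update (Function.update e i (e i - 2)) j
              (Function.update e i (e i - 2) j - 1)) x)
        = ∑ i ∈ s, ((e i : ℝ) * ((e i - 1 : ℕ) : ℝ) * (e j : ℝ)
          * (x j ^ (e j - 1) * (x i ^ (e i - 2) * ∏ k ∈ s.erase i, x k ^ e k))) := by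
      refine Finset.sum_congr rfl fun i hi => ?_
      have hij : i ≠ j := Finset.ne_of_mem_erase hi
      rw [Function.update_of_ne (Ne.symm hij), N_update2 e i j hij, hs]
    have hterm1 : N (Function.update e j (e j - 1)) x
        = x j ^ (e j - 1) * ∏ i ∈ s, x i ^ e i := by rw [N_update, hs]
    rw [htermj, hterms, hterm1]
    have hcast1 : ((e j - 1 : ℕ) : ℝ) = (e j : ℝ) - 1 := by
      rw [Nat.cast_sub h1j, Nat.cast_one]
    have hd2S : (t ^ 2 / 6 * ((e j : ℝ) * ((e j : ℝ) - 1)) * (((e j - 2 : ℕ) : ℝ) * x j ^ (e j - 2 - 1)))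
        * (∑ i ∈ s, (t ^ 2 / 6 * ((e i : ℝ) * ((e i : ℝ) - 1)) * x i ^ (e i - 2))
            * ∏ k ∈ s.erase i, x k ^ e k) = 0 := by
      by_cases h2 : e j ≤ 2
      · have h12 : e j = 1 ∨ e j = 2 := by omega
        rcases h12 with h12 | h12 <;> · rw [h12]; norm_num
      · push_neg at h2
        have hle1 : ∀ i ∈ s, e i ≤ 1 := fun i hi => by
          have := Finset.single_le_sum (f := e) (fun k _ => Nat.zero_le _) hi; omega
        rw [Finset.sum_eq_zero (fun i hi => by
          rw [C_eq_zero_of_le_one (hle1 i hi) t (x i), zero_mul]), mul_zero]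
    have hSsum : t ^ 2 / 6 * (∑ i ∈ s, ((e i : ℝ) * ((e i - 1 : ℕ) : ℝ) * (e j : ℝ)
          * (x j ^ (e j - 1) * (x i ^ (e i - 2) * ∏ k ∈ s.erase i, x k ^ e k))))
        = ((e j : ℝ) * x j ^ (e j - 1))
          * ∑ i ∈ s, (t ^ 2 / 6 * ((e i : ℝ) * ((e i : ℝ) - 1)) * x i ^ (e i - 2))
            * ∏ k ∈ s.erase i, x k ^ e k := by
      rw [Finset.mul_sum, Finset.mul_sum]
      refine Finset.sum_congr rfl fun i hi => ?_
      rcases Nat.eq_zero_or_pos (e i) with h0 | h1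
      · simp [h0]
      · rw [Nat.cast_sub h1, Nat.cast_one]; ring
    linear_combination - hSsum + hd2S
      - (t ^ 2 / 6 * (e j : ℝ) * ((e j - 2 : ℕ) : ℝ) * x j ^ (e j - 2 - 1)
          * ∏ i ∈ s, x i ^ e i) * hcast1

end SGaux

/-- For a multivariate quartic polynomial `f`, the gradient of the Steklov function satisfies
`∇ₓ μ_f(x,t) = ∇f(x) + (t²/6) Σᵢ ∇f_{ii}(x)`. -/
theorem steklov_gradient {n : ℕ} (f : (Fin n → ℝ) → ℝ) (hf : IsMQP f)
    (x : Fin n → ℝ) (t : ℝ) (ht : 0 < t) :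
    grad (fun y => steklov f y t) x
      = grad f x + (t ^ 2 / 6) • ∑ i, grad (pd i (pd i f)) x := by
  classical
  obtain ⟨P, hdeg, hfP⟩ := hf
  have hf' : f = fun y => ∑ d ∈ P.support, MvPolynomial.coeff d P * SGaux.N (fun i => d i) y := by
    funext y
    rw [hfP y, MvPolynomial.eval_eq']
    rfl
  have hdeg4 : ∀ d ∈ P.support, ∑ i, d i ≤ 4 := by
    intro d hd
    have h1 := MvPolynomial.le_totalDegree hd
    have h2 : (d.sum fun _ k => k) = ∑ i, d i := Finsupp.sum_fintype _ _ (fun _ => rfl)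
    omega
  have hd4 : ∀ d ∈ P.support, ∀ i, d i ≤ 4 := by
    intro d hd i
    have h1 : d i ≤ ∑ k, d k :=
      Finset.single_le_sum (f := fun k => d k) (fun k _ => Nat.zero_le _) (Finset.mem_univ i)
    exact le_trans h1 (hdeg4 d hd)
  rw [hf']
  funext j
  simp only [grad, Pi.add_apply, Pi.smul_apply, Finset.sum_apply, smul_eq_mul]
  set c : (Fin n →₀ ℕ) → ℝ := fun d => MvPolynomial.coeff d P with hc
  -- LHS
  have hL : (fun y => steklov (fun z => ∑ d ∈ P.support, c d * SGaux.N (fun i => d i) z) y t)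
      = fun y => ∑ d ∈ P.support, c d * ∏ i, SGaux.Sk (d i) t (y i) := by
    funext y
    rw [SGaux.steklov_sum _ _ _ (fun d _ => (SGaux.differentiable_N _).continuous) y t]
    exact Finset.sum_congr rfl fun d hd => by
      rw [SGaux.steklov_N _ (hd4 d hd) y ht]
  rw [hL]
  have hL2 : pd j (fun y => ∑ d ∈ P.support, c d * ∏ i, SGaux.Sk (d i) t (y i)) x
      = ∑ d ∈ P.support, c d * pd j (fun y => ∏ i, SGaux.Sk (d i) t (y i)) x := by
    rw [SGaux.pd_sum_mul _ _ _ (fun d _ => SGaux.differentiable_Sk_prod _ t) j]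
  rw [hL2]
  -- RHS first term
  have hR1 : pd j (fun y => ∑ d ∈ P.support, c d * SGaux.N (fun i => d i) y) x
      = ∑ d ∈ P.support, c d * pd j (SGaux.N (fun i => d i)) x := by
    rw [SGaux.pd_sum_mul _ _ _ (fun d _ => SGaux.differentiable_N _) j]
  rw [hR1]
  -- RHS second term
  have hR2 : ∀ i : Fin n,
      pd j (pd i (pd i (fun y => ∑ d ∈ P.support, c d * SGaux.N (fun i => d i) y))) x
        = ∑ d ∈ P.support, c d * pd j (pd i (pd i (SGaux.N (fun i => d i)))) x := by
    intro i
    rw [SGaux.pd_sum_mul _ _ _ (fun d _ => SGaux.differentiable_N _) i,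
      SGaux.pd_sum_mul _ _ _ (fun d _ => SGaux.differentiable_pd_N _ i) i,
      SGaux.pd_sum_mul _ _ _ (fun d _ => SGaux.differentiable_pd_pd_N _ i) j]
  have hR2' : ∑ i, pd j (pd i (pd i (fun y => ∑ d ∈ P.support, c d * SGaux.N (fun i => d i) y))) x
      = ∑ d ∈ P.support, c d * ∑ i, pd j (pd i (pd i (SGaux.N (fun i => d i)))) x := by
    rw [Finset.sum_congr rfl fun i _ => hR2 i, Finset.sum_comm]
    exact Finset.sum_congr rfl fun d _ => by rw [Finset.mul_sum]
  rw [hR2']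
  have hstep : ∑ d ∈ P.support, c d * pd j (fun y => ∏ i, SGaux.Sk (d i) t (y i)) x
      = ∑ d ∈ P.support, (c d * pd j (SGaux.N (fun i => d i)) x
          + t ^ 2 / 6 * (c d * ∑ i, pd j (pd i (pd i (SGaux.N (fun i => d i)))) x)) :=
    Finset.sum_congr rfl fun d hd => by
      rw [SGaux.key (fun i => d i) (hdeg4 d hd) t x j]; ring
  rw [hstep, Finset.sum_add_distrib, ← Finset.mul_sum]
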